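/- arXiv:quant-ph/0007015 — 2 statements merged into one kernel-verified Lean document; each statement's English description precedes it below -/
import Mathlib

section
/- Let ψ and ψ₂ be two never-vanishing C^{2,1} solutions of the Schrödinger equation ∂u/∂t = (iℏ/2m)Δu − (i/ℏ)Vu on ℝⁿ × [t₀,t₁], and set φ := ψ₂/ψ. Then φ satisfies ∂φ/∂t + v_q·∇φ − (iℏ/2m)Δφ = 0, where v_q := (ℏ/(im))∇(log ψ). -/
open Complex Set

noncomputable def pderiv' {n : ℕ} (i : Fin n) (f : (Fin n → ℝ) → ℂ) (x : Fin n → ℝ) : ℂ :=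
  deriv (fun s => f (Function.update x i s)) (x i)

noncomputable def lap' {n : ℕ} (f : (Fin n → ℝ) → ℂ) (x : Fin n → ℝ) : ℂ :=
  ∑ i, pderiv' i (fun y => pderiv' i f y) x

/-- The update line `s ↦ Function.update x i s` is smooth. -/
lemma updateLine_contDiff {n : ℕ} (x : Fin n → ℝ) (i : Fin n) :
    ContDiff ℝ 2 (fun s : ℝ => Function.update x i s) := by
  have h : (fun s : ℝ => Function.update x i s)
      = fun s : ℝ => x + (s - x i) • (Pi.single i (1:ℝ) : Fin n → ℝ) := by
    funext s; ext j
    rcases eq_or_ne j i with hji | hji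
    · subst hji; simp
    · simp [Function.update_of_ne hji, Pi.single_apply, hji]
  rw [h]
  exact contDiff_const.add ((contDiff_id.sub contDiff_const).smul contDiff_const)

lemma pderiv'_pderiv' {n : ℕ} (h : (Fin n → ℝ) → ℂ) (x : Fin n → ℝ) (i : Fin n) :
    pderiv' i (fun y => pderiv' i h y) x
      = deriv (deriv (fun s => h (Function.update x i s))) (x i) := by
  unfold pderiv'
  congr 1
  funext s
  simp [Function.update_idem, Function.update_self]

/-- derivative of deriv for C² functions. -/
lemma contDiff_one_deriv (u : ℝ → ℂ) (hu : ContDiff ℝ 2 u) : ContDiff ℝ 1 (deriv u) := by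
  have h2 : ContDiff ℝ ((1 : WithTop ℕ∞) + 1) u := by
    rw [one_add_one_eq_two]; exact hu
  exact (contDiff_succ_iff_deriv.mp h2).2.2

lemma deriv2_div (u w : ℝ → ℂ) (hu : ContDiff ℝ 2 u) (hw : ContDiff ℝ 2 w)
    (hwne : ∀ s, w s ≠ 0) (c : ℝ) :
    deriv (deriv (fun s => u s / w s)) c =
      ((deriv (deriv u) c * w c - u c * deriv (deriv w) c) * w c
        - (deriv u c * w c - u c * deriv w c) * (2 * deriv w c)) / (w c) ^ 3 := by
  have hud : Differentiable ℝ u := hu.differentiable (by norm_num)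
  have hwd : Differentiable ℝ w := hw.differentiable (by norm_num)
  have hu' : Differentiable ℝ (deriv u) :=
    (contDiff_one_deriv u hu).differentiable one_ne_zero
  have hw' : Differentiable ℝ (deriv w) :=
    (contDiff_one_deriv w hw).differentiable one_ne_zero
  have h1 : deriv (fun s => u s / w s)
      = fun s => (deriv u s * w s - u s * deriv w s) / (w s) ^ 2 :=
    funext fun s => deriv_div (hud s) (hwd s) (hwne s)
  rw [h1]
  have hnum : DifferentiableAt ℝ (fun s => deriv u s * w s - u s * deriv w s) c :=
    ((hu' c).mul (hwd c)).sub ((hud c).mul (hw' c))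
  have hden : DifferentiableAt ℝ (fun s => (w s) ^ 2) c := (hwd c).pow 2
  rw [deriv_fun_div hnum hden (pow_ne_zero 2 (hwne c))]
  have hdnum : deriv (fun s => deriv u s * w s - u s * deriv w s) c
      = deriv (deriv u) c * w c + deriv u c * deriv w c
        - (deriv u c * deriv w c + u c * deriv (deriv w) c) := by
    rw [deriv_fun_sub (f := fun s => deriv u s * w s) (g := fun s => u s * deriv w s) ((hu' c).mul (hwd c)) ((hud c).mul (hw' c)),
      deriv_fun_mul (hu' c) (hwd c), deriv_fun_mul (hud c) (hw' c)]
  have hdden : deriv (fun s => (w s) ^ 2) c = 2 * w c * deriv w c := by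
    have hsq : (fun s => (w s) ^ 2) = fun s => w s * w s := funext fun s => sq (w s)
    rw [hsq, deriv_fun_mul (hwd c) (hwd c)]
    ring
  rw [hdnum, hdden]
  have hwc := hwne c
  field_simp
  ring

/-- the ratio `φ = ψ₂/ψ` of two never-vanishing solutions of the
Schrödinger equation satisfies `∂φ/∂t + v_q·∇φ − (iℏ/2m)Δφ = 0`, where
`v_q = (ℏ/(im))∇(log ψ) = (ℏ/(im)) ∇ψ/ψ`. -/
theorem ratio_of_schrodinger_solutions
    {n : ℕ} (hbar m : ℝ) (hhbar : 0 < hbar) (hm : 0 < m)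
    (V : (Fin n → ℝ) → ℝ) (hV : Measurable V)
    (t₀ t₁ : ℝ) (ht : t₀ ≤ t₁)
    (ψ ψ₂ : ℝ → (Fin n → ℝ) → ℂ)
    (hψ_smooth : ContDiff ℝ 2 (fun p : ℝ × (Fin n → ℝ) => ψ p.1 p.2))
    (hψ₂_smooth : ContDiff ℝ 2 (fun p : ℝ × (Fin n → ℝ) => ψ₂ p.1 p.2))
    (hψ_nonzero : ∀ t ∈ Icc t₀ t₁, ∀ x, ψ t x ≠ 0)
    (hψ₂_nonzero : ∀ t ∈ Icc t₀ t₁, ∀ x, ψ₂ t x ≠ 0)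
    (hψ_pde : ∀ t ∈ Icc t₀ t₁, ∀ x,
      deriv (fun s => ψ s x) t =
        (I * hbar / (2 * m)) * lap' (ψ t) x - (I / hbar) * (V x : ℂ) * ψ t x)
    (hψ₂_pde : ∀ t ∈ Icc t₀ t₁, ∀ x,
      deriv (fun s => ψ₂ s x) t =
        (I * hbar / (2 * m)) * lap' (ψ₂ t) x - (I / hbar) * (V x : ℂ) * ψ₂ t x) :
    ∀ t ∈ Icc t₀ t₁, ∀ x,
      deriv (fun s => ψ₂ s x / ψ s x) t
        + (∑ i, ((hbar : ℂ) / (I * m)) * (pderiv' i (ψ t) x / ψ t x) *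
              pderiv' i (fun z => ψ₂ t z / ψ t z) x)
        - (I * hbar / (2 * m)) * lap' (fun z => ψ₂ t z / ψ t z) x = 0 := by
  intro t htI x
  have hψ0 : ∀ y, ψ t y ≠ 0 := hψ_nonzero t htI
  -- 1D restrictions along coordinate lines
  set u : Fin n → ℝ → ℂ := fun i s => ψ₂ t (Function.update x i s) with hu_def
  set w : Fin n → ℝ → ℂ := fun i s => ψ t (Function.update x i s) with hw_def
  have hu2 : ∀ i, ContDiff ℝ 2 (u i) := fun i =>
    hψ₂_smooth.comp (contDiff_const.prodMk (updateLine_contDiff x i))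
  have hw2 : ∀ i, ContDiff ℝ 2 (w i) := fun i =>
    hψ_smooth.comp (contDiff_const.prodMk (updateLine_contDiff x i))
  have hud : ∀ i, Differentiable ℝ (u i) := fun i => (hu2 i).differentiable (by norm_num)
  have hwd : ∀ i, Differentiable ℝ (w i) := fun i => (hw2 i).differentiable (by norm_num)
  have hwne : ∀ i s, w i s ≠ 0 := fun i s => hψ0 _
  have hwx : ∀ i, w i (x i) = ψ t x := fun i => by simp [hw_def]
  have hux : ∀ i, u i (x i) = ψ₂ t x := fun i => by simp [hu_def]
  set A := ψ t x with hA
  set B := ψ₂ t x with hB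
  have hA0 : A ≠ 0 := hψ0 x
  -- laplacian of the ratio, per coordinate
  have hlapφ : lap' (fun z => ψ₂ t z / ψ t z) x
      = ∑ i, ((deriv (deriv (u i)) (x i) * A - B * deriv (deriv (w i)) (x i)) * A
          - (deriv (u i) (x i) * A - B * deriv (w i) (x i)) * (2 * deriv (w i) (x i)))
            / A ^ 3 := by
    unfold lap'
    refine Finset.sum_congr rfl fun i _ => ?_
    rw [pderiv'_pderiv']
    have : (fun s => (fun z => ψ₂ t z / ψ t z) (Function.update x i s))
        = fun s => u i s / w i s := rfl
    rw [this, deriv2_div (u i) (w i) (hu2 i) (hw2 i) (hwne i) (x i)]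
    rw [hwx, hux]
  have hlapψ : lap' (ψ t) x = ∑ i, deriv (deriv (w i)) (x i) := by
    unfold lap'
    exact Finset.sum_congr rfl fun i _ => pderiv'_pderiv' (ψ t) x i
  have hlapψ₂ : lap' (ψ₂ t) x = ∑ i, deriv (deriv (u i)) (x i) := by
    unfold lap'
    exact Finset.sum_congr rfl fun i _ => pderiv'_pderiv' (ψ₂ t) x i
  -- the middle sum
  have hmid : ∀ i, pderiv' i (fun z => ψ₂ t z / ψ t z) x
      = (deriv (u i) (x i) * A - B * deriv (w i) (x i)) / A ^ 2 := by
    intro i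
    have : pderiv' i (fun z => ψ₂ t z / ψ t z) x
        = deriv (fun s => u i s / w i s) (x i) := rfl
    rw [this, deriv_fun_div (hud i (x i)) (hwd i (x i)) (hwne i (x i)), hwx, hux]
  have hpw : ∀ i, pderiv' i (ψ t) x = deriv (w i) (x i) := fun i => rfl
  -- time derivative of the ratio
  have hdt : DifferentiableAt ℝ (fun s => ψ s x) t := by
    have hD : Differentiable ℝ (fun p : ℝ × (Fin n → ℝ) => ψ p.1 p.2) :=
      hψ_smooth.differentiable (by norm_num)
    exact (hD.comp (differentiable_id.prodMk (differentiable_const x))) t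
  have hdt₂ : DifferentiableAt ℝ (fun s => ψ₂ s x) t := by
    have hD : Differentiable ℝ (fun p : ℝ × (Fin n → ℝ) => ψ₂ p.1 p.2) :=
      hψ₂_smooth.differentiable (by norm_num)
    exact (hD.comp (differentiable_id.prodMk (differentiable_const x))) t
  have hTd : deriv (fun s => ψ₂ s x / ψ s x) t
      = (deriv (fun s => ψ₂ s x) t * A - B * deriv (fun s => ψ s x) t) / A ^ 2 := by
    rw [deriv_fun_div hdt₂ hdt hA0]
  rw [hTd, hψ_pde t htI x, hψ₂_pde t htI x, hlapψ, hlapψ₂, hlapφ]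
  have hmid' : (∑ i, ((hbar : ℂ) / (I * m)) * (pderiv' i (ψ t) x / ψ t x) *
        pderiv' i (fun z => ψ₂ t z / ψ t z) x)
      = ∑ i, ((hbar : ℂ) / (I * m)) * (deriv (w i) (x i) / A) *
          ((deriv (u i) (x i) * A - B * deriv (w i) (x i)) / A ^ 2) := by
    refine Finset.sum_congr rfl fun i _ => ?_
    rw [hmid i, hpw i, hA]
  rw [hmid']
  -- turn the time-derivative part into a sum over coordinates
  have hI : (I : ℂ) ≠ 0 := I_ne_zero
  have hm0 : (m : ℂ) ≠ 0 := by exact_mod_cast hm.ne'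
  have hT2 : ((I * ↑hbar / (2 * ↑m)) * (∑ i, deriv (deriv (u i)) (x i))
        - (I / ↑hbar) * (V x : ℂ) * ψ₂ t x) * A
        - B * ((I * ↑hbar / (2 * ↑m)) * (∑ i, deriv (deriv (w i)) (x i))
        - (I / ↑hbar) * (V x : ℂ) * ψ t x)
      = ∑ i, (I * ↑hbar / (2 * ↑m))
          * (deriv (deriv (u i)) (x i) * A - B * deriv (deriv (w i)) (x i)) := by
    have h1 : (∑ i, (I * ↑hbar / (2 * ↑m))
          * (deriv (deriv (u i)) (x i) * A - B * deriv (deriv (w i)) (x i)))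
        = (∑ i, (I * ↑hbar / (2 * ↑m)) * deriv (deriv (u i)) (x i)) * A
          - B * ∑ i, (I * ↑hbar / (2 * ↑m)) * deriv (deriv (w i)) (x i) := by
      rw [Finset.sum_mul, Finset.mul_sum, ← Finset.sum_sub_distrib]
      exact Finset.sum_congr rfl fun i _ => by ring
    rw [h1, ← Finset.mul_sum, ← Finset.mul_sum, ← hA, ← hB]
    ring
  rw [hT2]
  rw [Finset.sum_div, Finset.mul_sum, ← Finset.sum_add_distrib, ← Finset.sum_sub_distrib]
  refine Finset.sum_eq_zero fun i _ => ?_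
  have hinv : ((hbar : ℂ)) / (I * m) = -(I * hbar / m) := by
    rw [div_mul_eq_div_div, div_I]
    ring
  rw [hinv]
  field_simp
  ring
end

section
/- Let ψ be a never-vanishing C^{2,1} solution of the Schrödinger equation ∂ψ/∂t = (iℏ/2m)Δψ − (i/ℏ)Vψ. Define L_b f := v_q·∇f − (iℏ/2m)Δf with v_q = (ℏ/(im))∇(log ψ), and H f := −(ℏ²/2m)Δf + Vf. Then for every C^{2,1} function f with compact support, (∂/∂t + L_b) f = ψ^{−1} (∂/∂t + (i/ℏ)H)(ψ f). -/
open Complex Set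

lemma diffAt_comp_update {n : ℕ} (i : Fin n) {g : (Fin n → ℝ) → ℂ} {x : Fin n → ℝ}
    (hg : DifferentiableAt ℝ g x) :
    DifferentiableAt ℝ (fun s => g (Function.update x i s)) (x i) := by
  have hu := (hasDerivAt_update x i (x i)).differentiableAt
  have hx : Function.update x i (x i) = x := Function.update_eq_self i x
  have hg2 : DifferentiableAt ℝ g (Function.update x i (x i)) := by rw [hx]; exact hg
  exact hg2.comp (x i) hu

lemma pderiv'_eq {n : ℕ} (i : Fin n) {g : (Fin n → ℝ) → ℂ} {x : Fin n → ℝ}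
    (hg : DifferentiableAt ℝ g x) :
    pderiv' i g x = fderiv ℝ g x (Pi.single i (1:ℝ)) := by
  have hx : Function.update x i (x i) = x := Function.update_eq_self i x
  have hF : HasFDerivAt g (fderiv ℝ g x) (Function.update x i (x i)) := by
    rw [hx]; exact hg.hasFDerivAt
  have h := hF.comp_hasDerivAt (x i) (hasDerivAt_update x i (x i))
  exact h.deriv

lemma pderiv'_mul {n : ℕ} (i : Fin n) {g h : (Fin n → ℝ) → ℂ} {x : Fin n → ℝ}
    (hg : DifferentiableAt ℝ g x) (hh : DifferentiableAt ℝ h x) :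
    pderiv' i (fun y => g y * h y) x = pderiv' i g x * h x + g x * pderiv' i h x := by
  have hx : Function.update x i (x i) = x := Function.update_eq_self i x
  have hg' := diffAt_comp_update i hg
  have hh' := diffAt_comp_update i hh
  unfold pderiv'
  rw [deriv_fun_mul hg' hh', hx]

lemma pderiv'_add {n : ℕ} (i : Fin n) {g h : (Fin n → ℝ) → ℂ} {x : Fin n → ℝ}
    (hg : DifferentiableAt ℝ g x) (hh : DifferentiableAt ℝ h x) :
    pderiv' i (fun y => g y + h y) x = pderiv' i g x + pderiv' i h x := by
  have hg' := diffAt_comp_update i hg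
  have hh' := diffAt_comp_update i hh
  unfold pderiv'
  rw [deriv_fun_add hg' hh']

lemma differentiable_pderiv' {n : ℕ} (i : Fin n) {g : (Fin n → ℝ) → ℂ}
    (hg : ContDiff ℝ 2 g) : Differentiable ℝ (pderiv' i g) := by
  have heq : pderiv' i g = fun y => (fderiv ℝ g y) (Pi.single i (1:ℝ)) := by
    funext y
    exact pderiv'_eq i (hg.differentiable (by norm_num) y)
  rw [heq]
  have h1 : ContDiff ℝ 1 (fderiv ℝ g) := hg.fderiv_right (by norm_num)
  exact (h1.clm_apply contDiff_const).differentiable (by norm_num)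

lemma lap'_mul {n : ℕ} {g h : (Fin n → ℝ) → ℂ}
    (hg : ContDiff ℝ 2 g) (hh : ContDiff ℝ 2 h) (x : Fin n → ℝ) :
    lap' (fun y => g y * h y) x
      = lap' g x * h x + 2 * ∑ i, pderiv' i g x * pderiv' i h x + g x * lap' h x := by
  have hgd : Differentiable ℝ g := hg.differentiable (by norm_num)
  have hhd : Differentiable ℝ h := hh.differentiable (by norm_num)
  have key : ∀ i : Fin n,
      pderiv' i (fun y => pderiv' i (fun z => g z * h z) y) x
        = pderiv' i (fun y => pderiv' i g y) x * h x
          + 2 * (pderiv' i g x * pderiv' i h x)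
          + g x * pderiv' i (fun y => pderiv' i h y) x := by
    intro i
    have h1 : (fun y => pderiv' i (fun z => g z * h z) y)
        = fun y => pderiv' i g y * h y + g y * pderiv' i h y := by
      funext y; exact pderiv'_mul i (hgd y) (hhd y)
    rw [h1]
    have dpg := differentiable_pderiv' i hg
    have dph := differentiable_pderiv' i hh
    rw [pderiv'_add i (show DifferentiableAt ℝ (fun y => pderiv' i g y * h y) x from (dpg x).mul (hhd x))
          (show DifferentiableAt ℝ (fun y => g y * pderiv' i h y) x from (hgd x).mul (dph x)),
        pderiv'_mul i (dpg x) (hhd x), pderiv'_mul i (hgd x) (dph x)]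
    ring
  unfold lap'
  rw [Finset.sum_congr rfl fun i _ => key i]
  rw [Finset.sum_add_distrib, Finset.sum_add_distrib, ← Finset.sum_mul,
      ← Finset.mul_sum, ← Finset.mul_sum]

/-- for a never-vanishing solution `ψ` of the Schrödinger
equation, with `L_b f = v_q·∇f − (iℏ/2m)Δf`, `v_q = (ℏ/(im))∇(log ψ)`, and
`H f = −(ℏ²/2m)Δf + Vf`, one has
`(∂/∂t + L_b) f = ψ⁻¹ (∂/∂t + (i/ℏ)H)(ψ f)` for compactly supported C^{2,1} `f`. -/
theorem bidirectional_generator_hamiltonian_conjugation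
    {n : ℕ} (hbar m : ℝ) (hhbar : 0 < hbar) (hm : 0 < m)
    (V : (Fin n → ℝ) → ℝ) (hV : Measurable V)
    (t₀ t₁ : ℝ) (ht : t₀ ≤ t₁)
    (ψ : ℝ → (Fin n → ℝ) → ℂ)
    (hψ_smooth : ContDiff ℝ 2 (fun p : ℝ × (Fin n → ℝ) => ψ p.1 p.2))
    (hψ_nonzero : ∀ t ∈ Icc t₀ t₁, ∀ x, ψ t x ≠ 0)
    (hψ_pde : ∀ t ∈ Icc t₀ t₁, ∀ x,
      deriv (fun s => ψ s x) t =
        (I * hbar / (2 * m)) * lap' (ψ t) x - (I / hbar) * (V x : ℂ) * ψ t x)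
    (f : ℝ → (Fin n → ℝ) → ℂ)
    (hf_smooth : ContDiff ℝ 2 (fun p : ℝ × (Fin n → ℝ) => f p.1 p.2))
    (hf_supp : HasCompactSupport (fun p : ℝ × (Fin n → ℝ) => f p.1 p.2)) :
    ∀ t ∈ Icc t₀ t₁, ∀ x,
      -- (∂/∂t + L_b) f
      deriv (fun s => f s x) t
        + (∑ i, ((hbar : ℂ) / (I * m)) * (pderiv' i (ψ t) x / ψ t x) *
              pderiv' i (f t) x)
        - (I * hbar / (2 * m)) * lap' (f t) x
      =
      -- ψ⁻¹ (∂/∂t + (i/ℏ)H)(ψ f)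
      (ψ t x)⁻¹ *
        (deriv (fun s => ψ s x * f s x) t
          + (I / hbar) *
            (-(hbar ^ 2 / (2 * m)) * lap' (fun y => ψ t y * f t y) x
              + (V x : ℂ) * (ψ t x * f t x))) := by
  intro t htmem x
  have hP : ψ t x ≠ 0 := hψ_nonzero t htmem x
  have hψslice : ContDiff ℝ 2 (ψ t) := hψ_smooth.comp (contDiff_const.prodMk contDiff_id)
  have hfslice : ContDiff ℝ 2 (f t) := hf_smooth.comp (contDiff_const.prodMk contDiff_id)
  have hψt : DifferentiableAt ℝ (fun s => ψ s x) t :=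
    ((hψ_smooth.differentiable (by norm_num)) (t, x)).comp (f := fun s : ℝ => (s, x)) t
      ((differentiable_id.prodMk (differentiable_const x)) t)
  have hft : DifferentiableAt ℝ (fun s => f s x) t :=
    ((hf_smooth.differentiable (by norm_num)) (t, x)).comp (f := fun s : ℝ => (s, x)) t
      ((differentiable_id.prodMk (differentiable_const x)) t)
  have hdm : deriv (fun s => ψ s x * f s x) t
      = deriv (fun s => ψ s x) t * f t x + ψ t x * deriv (fun s => f s x) t :=
    deriv_fun_mul hψt hft
  have hsum : (∑ i, ((hbar : ℂ) / (I * m)) * (pderiv' i (ψ t) x / ψ t x) *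
        pderiv' i (f t) x)
      = ((hbar : ℂ) / (I * m)) * (ψ t x)⁻¹ *
          ∑ i, pderiv' i (ψ t) x * pderiv' i (f t) x := by
    rw [Finset.mul_sum]
    exact Finset.sum_congr rfl fun i _ => by ring
  rw [hdm, lap'_mul hψslice hfslice, hψ_pde t htmem x, hsum]
  have hI : (I : ℂ) ≠ 0 := Complex.I_ne_zero
  have hh : (hbar : ℂ) ≠ 0 := Complex.ofReal_ne_zero.mpr hhbar.ne'
  have hmc : (m : ℂ) ≠ 0 := Complex.ofReal_ne_zero.mpr hm.ne'
  rw [inv_mul_eq_div, eq_div_iff hP]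
  field_simp
  linear_combination (2 * (hbar:ℂ)^2 *
    ∑ i, pderiv' i (ψ t) x * pderiv' i (f t) x) * Complex.I_sq
end
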